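/- Let H be the subgroup of SL(2,ℤ) generated by −I together with the six matrices [[1,1],[0,1]], [[1,0],[11,1]], [[−2,−1],[11,5]], [[2,−1],[11,−5]], [[10,3],[33,10]], [[23,8],[66,23]], and let T = [[1,1],[0,1]]. Then the level of H is 11: the normal closure of {T¹¹} in SL(2,ℤ) is contained in H, and for every natural number n with 1 ≤ n ≤ 10, the normal closure of {Tⁿ} in SL(2,ℤ) is not contained in H. -/

import Mathlib

open Matrix
open scoped MatrixGroups

/-- `T = [[1,1],[0,1]]` in `SL(2,ℤ)`. -/
def T : SL(2, ℤ) := ⟨!![1, 1; 0, 1], by norm_num [Matrix.det_fin_two_of]⟩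

/-- `[[1,0],[11,1]]`. -/
def m2 : SL(2, ℤ) := ⟨!![1, 0; 11, 1], by norm_num [Matrix.det_fin_two_of]⟩

/-- `[[−2,−1],[11,5]]`. -/
def m3 : SL(2, ℤ) := ⟨!![-2, -1; 11, 5], by norm_num [Matrix.det_fin_two_of]⟩

/-- `[[2,−1],[11,−5]]`. -/
def m4 : SL(2, ℤ) := ⟨!![2, -1; 11, -5], by norm_num [Matrix.det_fin_two_of]⟩

/-- `[[10,3],[33,10]]`. -/
def m5 : SL(2, ℤ) := ⟨!![10, 3; 33, 10], by norm_num [Matrix.det_fin_two_of]⟩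

/-- `[[23,8],[66,23]]`. -/
def m6 : SL(2, ℤ) := ⟨!![23, 8; 66, 23], by norm_num [Matrix.det_fin_two_of]⟩

/-- The subgroup `H ≤ SL(2,ℤ)` generated by `−I` and the six listed matrices. -/
def H : Subgroup SL(2, ℤ) :=
  Subgroup.closure {-1, T, m2, m3, m4, m5, m6}

/-! ### Auxiliary development -/

/-- The family `Nn n a c = I + n·[[−ac, a²],[−c², ac]]`; it has determinant 1 for all `n`. -/
def Nn (n a c : ℤ) : SL(2, ℤ) :=
  ⟨!![1 - n*a*c, n*a^2; -(n*c^2), 1 + n*a*c], by rw [Matrix.det_fin_two_of]; ring⟩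

/- explicit inverse elements -/
def Tinv : SL(2, ℤ) := ⟨!![1, -1; 0, 1], by norm_num [Matrix.det_fin_two_of]⟩
def m2i : SL(2, ℤ) := ⟨!![1, 0; -11, 1], by norm_num [Matrix.det_fin_two_of]⟩
def m3i : SL(2, ℤ) := ⟨!![5, 1; -11, -2], by norm_num [Matrix.det_fin_two_of]⟩
def m4i : SL(2, ℤ) := ⟨!![-5, 1; -11, 2], by norm_num [Matrix.det_fin_two_of]⟩
def m5i : SL(2, ℤ) := ⟨!![10, -3; -33, 10], by norm_num [Matrix.det_fin_two_of]⟩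
def m6i : SL(2, ℤ) := ⟨!![23, -8; -66, 23], by norm_num [Matrix.det_fin_two_of]⟩
def Pinv : SL(2, ℤ) := ⟨!![34, -9; 121, -32], by norm_num [Matrix.det_fin_two_of]⟩

lemma Nn_mul (m n a c : ℤ) : Nn m a c * Nn n a c = Nn (m + n) a c := by
  apply Matrix.SpecialLinearGroup.ext
  intro i j
  rw [Matrix.SpecialLinearGroup.coe_mul]
  fin_cases i <;> fin_cases j <;>
    simp [Nn, Matrix.mul_apply, Fin.sum_univ_succ] <;> ring

lemma Nn_pow (m a c : ℤ) (k : ℕ) : (Nn m a c) ^ k = Nn (k * m) a c := by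
  induction k with
  | zero =>
    apply Matrix.SpecialLinearGroup.ext
    intro i j
    rw [pow_zero, Matrix.SpecialLinearGroup.coe_one]
    fin_cases i <;> fin_cases j <;> simp [Nn]
  | succ k ih =>
    rw [pow_succ, ih, Nn_mul]
    congr 1
    push_cast
    ring

lemma Nn_scale (m k p q : ℤ) : Nn m (k*p) (k*q) = Nn (m*k^2) p q := by
  apply Matrix.SpecialLinearGroup.ext
  intro i j
  fin_cases i <;> fin_cases j <;> simp [Nn] <;> ring

/- membership of the generators -/
lemma hmT : T ∈ H := Subgroup.subset_closure (by simp)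
lemma hmm2 : m2 ∈ H := Subgroup.subset_closure (by simp)
lemma hmm3 : m3 ∈ H := Subgroup.subset_closure (by simp)
lemma hmm4 : m4 ∈ H := Subgroup.subset_closure (by simp)
lemma hmm5 : m5 ∈ H := Subgroup.subset_closure (by simp)
lemma hmm6 : m6 ∈ H := Subgroup.subset_closure (by simp)

/- membership of the inverse elements -/
lemma prod_eq_one_tac {x y : SL(2, ℤ)} (h : x * y = 1) (hx : x ∈ H) : y ∈ H := by
  have : y = x⁻¹ := by rw [← one_mul y, ← inv_mul_cancel x, mul_assoc, h, mul_one]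
  rw [this]; exact H.inv_mem hx

lemma hmTinv : Tinv ∈ H := by
  refine prod_eq_one_tac ?_ hmT
  apply Matrix.SpecialLinearGroup.ext; intro i j
  rw [Matrix.SpecialLinearGroup.coe_mul, Matrix.SpecialLinearGroup.coe_one]
  fin_cases i <;> fin_cases j <;>
    simp [T, Tinv, Matrix.mul_apply, Fin.sum_univ_succ]

lemma hmm2i : m2i ∈ H := by
  refine prod_eq_one_tac ?_ hmm2
  apply Matrix.SpecialLinearGroup.ext; intro i j
  rw [Matrix.SpecialLinearGroup.coe_mul, Matrix.SpecialLinearGroup.coe_one]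
  fin_cases i <;> fin_cases j <;>
    simp [m2, m2i, Matrix.mul_apply, Fin.sum_univ_succ]

lemma hmm3i : m3i ∈ H := by
  refine prod_eq_one_tac ?_ hmm3
  apply Matrix.SpecialLinearGroup.ext; intro i j
  rw [Matrix.SpecialLinearGroup.coe_mul, Matrix.SpecialLinearGroup.coe_one]
  fin_cases i <;> fin_cases j <;>
    simp [m3, m3i, Matrix.mul_apply, Fin.sum_univ_succ]

lemma hmm4i : m4i ∈ H := by
  refine prod_eq_one_tac ?_ hmm4
  apply Matrix.SpecialLinearGroup.ext; intro i j
  rw [Matrix.SpecialLinearGroup.coe_mul, Matrix.SpecialLinearGroup.coe_one]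
  fin_cases i <;> fin_cases j <;>
    simp [m4, m4i, Matrix.mul_apply, Fin.sum_univ_succ]

lemma hmm5i : m5i ∈ H := by
  refine prod_eq_one_tac ?_ hmm5
  apply Matrix.SpecialLinearGroup.ext; intro i j
  rw [Matrix.SpecialLinearGroup.coe_mul, Matrix.SpecialLinearGroup.coe_one]
  fin_cases i <;> fin_cases j <;>
    simp [m5, m5i, Matrix.mul_apply, Fin.sum_univ_succ]

lemma hmm6i : m6i ∈ H := by
  refine prod_eq_one_tac ?_ hmm6
  apply Matrix.SpecialLinearGroup.ext; intro i j
  rw [Matrix.SpecialLinearGroup.coe_mul, Matrix.SpecialLinearGroup.coe_one]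
  fin_cases i <;> fin_cases j <;>
    simp [m6, m6i, Matrix.mul_apply, Fin.sum_univ_succ]

/- the four base conjugates -/
lemma hW1 : Nn 11 1 3 ∈ H := by
  have h : Nn 11 1 3 = m5 * m6i * m4i * m2 * m3 * Tinv := by
    apply Matrix.SpecialLinearGroup.ext; intro i j
    simp only [Matrix.SpecialLinearGroup.coe_mul]
    fin_cases i <;> fin_cases j <;>
      simp [Nn, m2, m3, m5, m4i, m6i, Tinv, Matrix.mul_apply, Fin.sum_univ_succ]
  rw [h]
  exact H.mul_mem (H.mul_mem (H.mul_mem (H.mul_mem (H.mul_mem hmm5 hmm6i) hmm4i) hmm2) hmm3) hmTinv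

lemma hW2 : Nn 11 1 (-3) ∈ H := by
  have h : Nn 11 1 (-3) = m6i * m5 * m4i * m2 * m3 * Tinv := by
    apply Matrix.SpecialLinearGroup.ext; intro i j
    simp only [Matrix.SpecialLinearGroup.coe_mul]
    fin_cases i <;> fin_cases j <;>
      simp [Nn, m2, m3, m5, m4i, m6i, Tinv, Matrix.mul_apply, Fin.sum_univ_succ]
  rw [h]
  exact H.mul_mem (H.mul_mem (H.mul_mem (H.mul_mem (H.mul_mem hmm6i hmm5) hmm4i) hmm2) hmm3) hmTinv

lemma hPel : Nn 1 3 11 ∈ H := by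
  have h : Nn 1 3 11 = m4 * m6 * m3i * m5i := by
    apply Matrix.SpecialLinearGroup.ext; intro i j
    simp only [Matrix.SpecialLinearGroup.coe_mul]
    fin_cases i <;> fin_cases j <;>
      simp [Nn, m4, m6, m3i, m5i, Matrix.mul_apply, Fin.sum_univ_succ]
  rw [h]
  exact H.mul_mem (H.mul_mem (H.mul_mem hmm4 hmm6) hmm3i) hmm5i

lemma mem_of_conj {x y g : SL(2, ℤ)} (hg : g ∈ H) (hy : y ∈ H) (h : g * x = y * g) :
    x ∈ H := by
  have hx : x = g⁻¹ * y * g := by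
    rw [mul_assoc, ← h, ← mul_assoc, inv_mul_cancel, one_mul]
  rw [hx]
  exact H.mul_mem (H.mul_mem (H.inv_mem hg) hy) hg

lemma hP2el : Nn 1 3 (-11) ∈ H := by
  refine mem_of_conj hmm5 hPel ?_
  apply Matrix.SpecialLinearGroup.ext; intro i j
  simp only [Matrix.SpecialLinearGroup.coe_mul]
  fin_cases i <;> fin_cases j <;>
    simp [Nn, m5, Matrix.mul_apply, Fin.sum_univ_succ]

lemma hmPinv : Pinv ∈ H := by
  refine prod_eq_one_tac ?_ hPel
  apply Matrix.SpecialLinearGroup.ext; intro i j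
  rw [Matrix.SpecialLinearGroup.coe_mul, Matrix.SpecialLinearGroup.coe_one]
  fin_cases i <;> fin_cases j <;>
    simp [Nn, Pinv, Matrix.mul_apply, Fin.sum_univ_succ]

lemma hN311 : Nn 11 3 11 ∈ H := by
  have h := Nn_pow 1 3 11 11
  norm_num at h
  rw [← h]
  exact pow_mem hPel 11

lemma hN31m : Nn 11 3 (-11) ∈ H := by
  have h := Nn_pow 1 3 (-11) 11
  norm_num at h
  rw [← h]
  exact pow_mem hP2el 11

lemma hN10 : Nn 11 1 0 ∈ H := by
  have hT : T = Nn 1 1 0 := by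
    apply Matrix.SpecialLinearGroup.ext; intro i j
    fin_cases i <;> fin_cases j <;> simp [Nn, T]
  have h := Nn_pow 1 1 0 11
  norm_num at h
  rw [← h, ← hT]
  exact pow_mem hmT 11

lemma hN01 : Nn 11 0 1 ∈ H := by
  have h : Nn 11 0 1 = m2i := by
    apply Matrix.SpecialLinearGroup.ext; intro i j
    fin_cases i <;> fin_cases j <;> simp [Nn, m2i]
  rw [h]; exact hmm2i

lemma mem_scale {p q : ℤ} (h : Nn 11 p q ∈ H) (k : ℤ) : Nn 11 (k*p) (k*q) ∈ H := by
  rw [Nn_scale]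
  have he : (11 * k^2 : ℤ) = ((k.natAbs^2 : ℕ) : ℤ) * 11 := by
    rw [Nat.cast_pow, Int.natAbs_sq]
    ring
  rw [he, ← Nn_pow]
  exact pow_mem h _

/- conjugation equations for the reduction steps -/
section conjsteps
variable (a c : ℤ)

lemma cTinv : Tinv * Nn 11 a c = Nn 11 (a-c) c * Tinv := by
  apply Matrix.SpecialLinearGroup.ext; intro i j
  simp only [Matrix.SpecialLinearGroup.coe_mul]
  fin_cases i <;> fin_cases j <;>
    simp [Nn, Tinv, Matrix.mul_apply, Fin.sum_univ_succ] <;> ring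

lemma cT : T * Nn 11 a c = Nn 11 (a+c) c * T := by
  apply Matrix.SpecialLinearGroup.ext; intro i j
  simp only [Matrix.SpecialLinearGroup.coe_mul]
  fin_cases i <;> fin_cases j <;>
    simp [Nn, T, Matrix.mul_apply, Fin.sum_univ_succ] <;> ring

lemma cm2 : m2 * Nn 11 a c = Nn 11 a (c+11*a) * m2 := by
  apply Matrix.SpecialLinearGroup.ext; intro i j
  simp only [Matrix.SpecialLinearGroup.coe_mul]
  fin_cases i <;> fin_cases j <;>
    simp [Nn, m2, Matrix.mul_apply, Fin.sum_univ_succ] <;> ring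

lemma cm2i : m2i * Nn 11 a c = Nn 11 a (c-11*a) * m2i := by
  apply Matrix.SpecialLinearGroup.ext; intro i j
  simp only [Matrix.SpecialLinearGroup.coe_mul]
  fin_cases i <;> fin_cases j <;>
    simp [Nn, m2i, Matrix.mul_apply, Fin.sum_univ_succ] <;> ring

lemma cm3 : m3 * Nn 11 a c = Nn 11 (-2*a-c) (11*a+5*c) * m3 := by
  apply Matrix.SpecialLinearGroup.ext; intro i j
  simp only [Matrix.SpecialLinearGroup.coe_mul]
  fin_cases i <;> fin_cases j <;>
    simp [Nn, m3, Matrix.mul_apply, Fin.sum_univ_succ] <;> ring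

lemma cm3i : m3i * Nn 11 a c = Nn 11 (5*a+c) (-11*a-2*c) * m3i := by
  apply Matrix.SpecialLinearGroup.ext; intro i j
  simp only [Matrix.SpecialLinearGroup.coe_mul]
  fin_cases i <;> fin_cases j <;>
    simp [Nn, m3i, Matrix.mul_apply, Fin.sum_univ_succ] <;> ring

lemma cm4 : m4 * Nn 11 a c = Nn 11 (2*a-c) (11*a-5*c) * m4 := by
  apply Matrix.SpecialLinearGroup.ext; intro i j
  simp only [Matrix.SpecialLinearGroup.coe_mul]
  fin_cases i <;> fin_cases j <;>
    simp [Nn, m4, Matrix.mul_apply, Fin.sum_univ_succ] <;> ring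

lemma cm4i : m4i * Nn 11 a c = Nn 11 (-5*a+c) (-11*a+2*c) * m4i := by
  apply Matrix.SpecialLinearGroup.ext; intro i j
  simp only [Matrix.SpecialLinearGroup.coe_mul]
  fin_cases i <;> fin_cases j <;>
    simp [Nn, m4i, Matrix.mul_apply, Fin.sum_univ_succ] <;> ring

lemma cm5 : m5 * Nn 11 a c = Nn 11 (10*a+3*c) (33*a+10*c) * m5 := by
  apply Matrix.SpecialLinearGroup.ext; intro i j
  simp only [Matrix.SpecialLinearGroup.coe_mul]
  fin_cases i <;> fin_cases j <;>
    simp [Nn, m5, Matrix.mul_apply, Fin.sum_univ_succ] <;> ring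

lemma cm5i : m5i * Nn 11 a c = Nn 11 (10*a-3*c) (-33*a+10*c) * m5i := by
  apply Matrix.SpecialLinearGroup.ext; intro i j
  simp only [Matrix.SpecialLinearGroup.coe_mul]
  fin_cases i <;> fin_cases j <;>
    simp [Nn, m5i, Matrix.mul_apply, Fin.sum_univ_succ] <;> ring

lemma cm6 : m6 * Nn 11 a c = Nn 11 (23*a+8*c) (66*a+23*c) * m6 := by
  apply Matrix.SpecialLinearGroup.ext; intro i j
  simp only [Matrix.SpecialLinearGroup.coe_mul]
  fin_cases i <;> fin_cases j <;>
    simp [Nn, m6, Matrix.mul_apply, Fin.sum_univ_succ] <;> ring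

lemma cm6i : m6i * Nn 11 a c = Nn 11 (23*a-8*c) (-66*a+23*c) * m6i := by
  apply Matrix.SpecialLinearGroup.ext; intro i j
  simp only [Matrix.SpecialLinearGroup.coe_mul]
  fin_cases i <;> fin_cases j <;>
    simp [Nn, m6i, Matrix.mul_apply, Fin.sum_univ_succ] <;> ring

lemma cPinv : Pinv * Nn 11 a c = Nn 11 (34*a-9*c) (121*a-32*c) * Pinv := by
  apply Matrix.SpecialLinearGroup.ext; intro i j
  simp only [Matrix.SpecialLinearGroup.coe_mul]
  fin_cases i <;> fin_cases j <;>
    simp [Nn, Pinv, Matrix.mul_apply, Fin.sum_univ_succ] <;> ring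

lemma cP2 : (Nn 1 3 (-11)) * Nn 11 a c = Nn 11 (34*a+9*c) (-121*a-32*c) * (Nn 1 3 (-11)) := by
  apply Matrix.SpecialLinearGroup.ext; intro i j
  simp only [Matrix.SpecialLinearGroup.coe_mul]
  fin_cases i <;> fin_cases j <;>
    simp [Nn, Matrix.mul_apply, Fin.sum_univ_succ] <;> ring

end conjsteps

set_option maxHeartbeats 2000000 in
/-- Main reduction: every `Nn 11 a c` lies in `H`. -/
lemma main_mem (n : ℕ) : ∀ a c : ℤ, a^2 + 2*c^2 ≤ (n:ℤ) → Nn 11 a c ∈ H := by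
  induction n using Nat.strong_induction_on with
  | _ n ih =>
    have key : ∀ a c : ℤ, 0 < a → a^2 + 2*c^2 ≤ (n:ℤ) → Nn 11 a c ∈ H := by
      intro a c ha hm
      have hn1 : 1 ≤ n := by
        have h1 : (1:ℤ) ≤ (n:ℤ) := le_trans (by nlinarith) hm
        exact_mod_cast h1
      have hrec : ∀ a' c' : ℤ, a'^2 + 2*c'^2 < a^2 + 2*c^2 → Nn 11 a' c' ∈ H := by
        intro a' c' hlt
        refine ih (n-1) (by omega) a' c' ?_
        rw [Nat.cast_sub hn1]
        push_cast
        linarith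
      rcases lt_trichotomy c 0 with hc | hc | hc
      · -- c < 0
        rcases le_or_gt (-10*c) (19*a) with h1 | h1
        · exact mem_of_conj hmT (hrec (a+c) c (by nlinarith)) (cT a c)
        rcases le_or_gt (-1000*c) (2753*a) with h2 | h2
        · refine mem_of_conj hmm3 (hrec (-2*a-c) (11*a+5*c) ?_) (cm3 a c)
          nlinarith [mul_nonneg (by linarith : (0:ℤ) ≤ -10*c - 19*a) (by linarith : (0:ℤ) ≤ 2753*a + 1000*c),
            mul_nonneg ha.le (by linarith : (0:ℤ) ≤ 2753*a + 1000*c), mul_pos ha ha]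
        rcases lt_trichotomy (-c) (3*a) with h3 | h3 | h3
        · refine mem_of_conj hmm6 (hrec (23*a+8*c) (66*a+23*c) ?_) (cm6 a c)
          nlinarith [mul_pos (by nlinarith : (0:ℤ) < -4*c - 11*a) (by linarith : (0:ℤ) < 3*a + c)]
        · -- c = -3a
          have hc3 : c = a * (-3) := by linarith
          rw [hc3]
          simpa using mem_scale hW2 a
        rcases lt_trichotomy (-3*c) (11*a) with h4 | h4 | h4
        · refine mem_of_conj hmm5 (hrec (10*a+3*c) (33*a+10*c) ?_) (cm5 a c)
          nlinarith [mul_pos (by linarith : (0:ℤ) < -c - 3*a) (by linarith : (0:ℤ) < 11*a + 3*c)]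
        · -- 3c = -11a
          obtain ⟨k, hk⟩ : ∃ k, a = k * 3 := ⟨a / 3, by omega⟩
          have hck : c = k * (-11) := by omega
          rw [hk, hck]
          exact mem_scale hN31m k
        rcases le_or_gt (-10*c) (39*a) with h5 | h5
        · refine mem_of_conj hP2el (hrec (34*a+9*c) (-121*a-32*c) ?_) (cP2 a c)
          nlinarith [mul_pos (by linarith : (0:ℤ) < -3*c - 11*a) (by linarith : (0:ℤ) < 709*c + 2767*a)]
        rcases le_or_gt (-c) (6*a) with h6 | h6
        · refine mem_of_conj hmm3i (hrec (5*a+c) (-11*a-2*c) ?_) (cm3i a c)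
          nlinarith [mul_nonneg (by linarith : (0:ℤ) ≤ -10*c - 39*a) (by linarith : (0:ℤ) ≤ 6*a + c),
            mul_nonneg ha.le (by linarith : (0:ℤ) ≤ -10*c - 39*a),
            mul_nonneg ha.le (by linarith : (0:ℤ) ≤ 6*a + c), mul_pos ha ha]
        · refine mem_of_conj hmm2 (hrec a (c+11*a) ?_) (cm2 a c)
          nlinarith [mul_pos ha (by linarith : (0:ℤ) < -11*a - 2*c)]
      · -- c = 0
        rw [hc]
        simpa using mem_scale hN10 a
      · -- 0 < c
        rcases le_or_gt (10*c) (19*a) with h1 | h1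
        · exact mem_of_conj hmTinv (hrec (a-c) c (by nlinarith)) (cTinv a c)
        rcases le_or_gt (1000*c) (2753*a) with h2 | h2
        · refine mem_of_conj hmm4 (hrec (2*a-c) (11*a-5*c) ?_) (cm4 a c)
          nlinarith [mul_nonneg (by linarith : (0:ℤ) ≤ 10*c - 19*a) (by linarith : (0:ℤ) ≤ 2753*a - 1000*c),
            mul_nonneg ha.le (by linarith : (0:ℤ) ≤ 2753*a - 1000*c), mul_pos ha ha]
        rcases lt_trichotomy c (3*a) with h3 | h3 | h3
        · refine mem_of_conj hmm6i (hrec (23*a-8*c) (-66*a+23*c) ?_) (cm6i a c)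
          nlinarith [mul_pos (by nlinarith : (0:ℤ) < 4*c - 11*a) (by linarith : (0:ℤ) < 3*a - c)]
        · -- c = 3a
          have hc3 : c = a * 3 := by linarith
          rw [hc3]
          simpa using mem_scale hW1 a
        rcases lt_trichotomy (3*c) (11*a) with h4 | h4 | h4
        · refine mem_of_conj hmm5i (hrec (10*a-3*c) (-33*a+10*c) ?_) (cm5i a c)
          nlinarith [mul_pos (by linarith : (0:ℤ) < c - 3*a) (by linarith : (0:ℤ) < 11*a - 3*c)]
        · -- 3c = 11a
          obtain ⟨k, hk⟩ : ∃ k, a = k * 3 := ⟨a / 3, by omega⟩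
          have hck : c = k * 11 := by omega
          rw [hk, hck]
          exact mem_scale hN311 k
        rcases le_or_gt (10*c) (39*a) with h5 | h5
        · refine mem_of_conj hmPinv (hrec (34*a-9*c) (121*a-32*c) ?_) (cPinv a c)
          nlinarith [mul_pos (by linarith : (0:ℤ) < 3*c - 11*a) (by linarith : (0:ℤ) < 2767*a - 709*c)]
        rcases le_or_gt c (6*a) with h6 | h6
        · refine mem_of_conj hmm4i (hrec (-5*a+c) (-11*a+2*c) ?_) (cm4i a c)
          nlinarith [mul_nonneg (by linarith : (0:ℤ) ≤ 10*c - 39*a) (by linarith : (0:ℤ) ≤ 6*a - c),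
            mul_nonneg ha.le (by linarith : (0:ℤ) ≤ 10*c - 39*a),
            mul_nonneg ha.le (by linarith : (0:ℤ) ≤ 6*a - c), mul_pos ha ha]
        · refine mem_of_conj hmm2i (hrec a (c-11*a) ?_) (cm2i a c)
          nlinarith [mul_pos ha (by linarith : (0:ℤ) < 2*c - 11*a)]
    intro a c hm
    rcases lt_trichotomy a 0 with ha | ha | ha
    · have hsym : Nn 11 a c = Nn 11 (-a) (-c) := by
        apply Matrix.SpecialLinearGroup.ext; intro i j
        fin_cases i <;> fin_cases j <;> simp [Nn] <;> ring
      rw [hsym]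
      exact key (-a) (-c) (by linarith) (by nlinarith)
    · rw [ha]
      simpa using mem_scale hN01 c
    · exact key a c ha hm

lemma all_conj_mem : ∀ a c : ℤ, Nn 11 a c ∈ H := by
  intro a c
  refine main_mem (a^2 + 2*c^2).toNat a c ?_
  rw [Int.toNat_of_nonneg (by positivity)]

/-- Conjugation of `T^11` by an arbitrary element. -/
lemma conj_T11 (g : SL(2, ℤ)) :
    g * Nn 11 1 0 = Nn 11 ((g : Matrix (Fin 2) (Fin 2) ℤ) 0 0) ((g : Matrix (Fin 2) (Fin 2) ℤ) 1 0) * g := by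
  rcases g with ⟨M, hM⟩
  have hdet : M 0 0 * M 1 1 - M 0 1 * M 1 0 = 1 := by rwa [Matrix.det_fin_two] at hM
  apply Matrix.SpecialLinearGroup.ext
  intro i j
  erw [Matrix.SpecialLinearGroup.coe_mul, Matrix.SpecialLinearGroup.coe_mul]
  fin_cases i <;> fin_cases j <;> simp [Nn, Matrix.mul_apply, Fin.sum_univ_succ] <;>
    first
      | ring1
      | linear_combination (-11 * M 0 0) * hdet
      | linear_combination (-11 * M 1 0) * hdet

lemma T_pow (n : ℕ) : T ^ n = Nn n 1 0 := by
  have hT : T = Nn 1 1 0 := by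
    apply Matrix.SpecialLinearGroup.ext; intro i j
    fin_cases i <;> fin_cases j <;> simp [Nn, T]
  rw [hT, Nn_pow]
  norm_num

/-- The congruence condition cut out by `Γ₀(11)`. -/
def Gamma0 : Subgroup SL(2, ℤ) where
  carrier := {g | (11:ℤ) ∣ (g : Matrix (Fin 2) (Fin 2) ℤ) 1 0}
  one_mem' := by
    show (11:ℤ) ∣ (1 : Matrix (Fin 2) (Fin 2) ℤ) 1 0
    norm_num
  mul_mem' := by
    intro x y hx hy
    show (11:ℤ) ∣ ((x * y : SL(2,ℤ)) : Matrix (Fin 2) (Fin 2) ℤ) 1 0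
    rw [Matrix.SpecialLinearGroup.coe_mul, Matrix.mul_apply]
    rw [Fin.sum_univ_succ]
    simp only [Fin.sum_univ_one]
    exact dvd_add (hx.mul_right _) ((hy.mul_left _))
  inv_mem' := by
    intro x hx
    show (11:ℤ) ∣ ((x⁻¹ : SL(2,ℤ)) : Matrix (Fin 2) (Fin 2) ℤ) 1 0
    rw [Matrix.SpecialLinearGroup.coe_inv, Matrix.adjugate_fin_two]
    simpa using hx

lemma H_le_Gamma0 : H ≤ Gamma0 := by
  rw [H, Subgroup.closure_le]
  intro x hx
  simp only [Set.mem_insert_iff, Set.mem_singleton_iff] at hx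
  rcases hx with rfl | rfl | rfl | rfl | rfl | rfl | rfl
  all_goals show (11:ℤ) ∣ _
  all_goals simp [T, m2, m3, m4, m5, m6]
  all_goals norm_num

/-- The level of `H` is `11`: `H` contains the normal closure of `T¹¹` in `SL(2,ℤ)`,
but not the normal closure of `Tⁿ` for any `1 ≤ n ≤ 10`. -/
theorem level_of_H_eq_eleven :
    Subgroup.normalClosure {T ^ (11 : ℕ)} ≤ H ∧
      ∀ n : ℕ, 1 ≤ n → n ≤ 10 → ¬Subgroup.normalClosure {T ^ n} ≤ H := by
  constructor
  · show Subgroup.closure (Group.conjugatesOfSet {T ^ (11:ℕ)}) ≤ H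
    rw [Subgroup.closure_le]
    intro x hx
    rw [Group.mem_conjugatesOfSet_iff] at hx
    obtain ⟨b, hb, hconj⟩ := hx
    rw [Set.mem_singleton_iff] at hb
    subst hb
    obtain ⟨g, hg⟩ := isConj_iff.1 hconj
    have hb11 : T ^ (11:ℕ) = Nn 11 1 0 := by rw [T_pow]; norm_num
    have hx' : x = Nn 11 ((g : Matrix (Fin 2) (Fin 2) ℤ) 0 0) ((g : Matrix (Fin 2) (Fin 2) ℤ) 1 0) := by
      rw [← hg, hb11, conj_T11 g, mul_inv_cancel_right]
    rw [hx']
    exact all_conj_mem _ _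
  · intro n h1 h10 hle
    set Se : SL(2, ℤ) := ⟨!![0, -1; 1, 0], by norm_num [Matrix.det_fin_two_of]⟩ with hSe
    have hconj : Se * (T ^ n) * Se⁻¹ = Nn n 0 1 := by
      have heq : Se * Nn n 1 0 = Nn n 0 1 * Se := by
        apply Matrix.SpecialLinearGroup.ext; intro i j
        simp only [Matrix.SpecialLinearGroup.coe_mul]
        fin_cases i <;> fin_cases j <;>
          simp [Nn, hSe, Matrix.mul_apply, Fin.sum_univ_succ] <;> ring
      rw [T_pow, heq, mul_inv_cancel_right]
    have hmem : Nn n 0 1 ∈ Subgroup.normalClosure {T ^ n} := by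
      rw [← hconj]
      have h0 : T ^ n ∈ Subgroup.normalClosure {T ^ n} :=
        Subgroup.subset_normalClosure (Set.mem_singleton _)
      exact Subgroup.Normal.conj_mem Subgroup.normalClosure_normal _ h0 Se
    have hdvd : (11:ℤ) ∣ ((Nn n 0 1 : SL(2,ℤ)) : Matrix (Fin 2) (Fin 2) ℤ) 1 0 :=
      H_le_Gamma0 (hle hmem)
    have hent : ((Nn (n:ℤ) 0 1 : SL(2,ℤ)) : Matrix (Fin 2) (Fin 2) ℤ) 1 0 = -(n:ℤ) := by
      simp [Nn]
    rw [hent] at hdvd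
    have h11 : (11:ℤ) ∣ (n:ℤ) := (dvd_neg).mp hdvd
    have : (11:ℕ) ∣ n := by exact_mod_cast h11
    omega
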